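/- Let G be a group and σ, τ : G → G group endomorphisms such that G is (σ,τ)-abelian, i.e. σ(v)·u = u·τ(v) for all u, v ∈ G. Then every (σ,τ)-derivation D of ℂ[G] is a combination of (σ,τ)-central derivations; concretely, for every a ∈ G the coefficient map φ_a : G → ℂ defined by φ_a(g) = D(g)(σ(g)·a) is a group homomorphism from G to the additive group (ℂ, +). -/

import Mathlib

/-- Extension of a group endomorphism to a ℂ-algebra endomorphism of `ℂ[G]`. -/
noncomputable def algExt {G : Type*} [Group G] (σ : G →* G) :
    MonoidAlgebra ℂ G →ₐ[ℂ] MonoidAlgebra ℂ G :=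
  MonoidAlgebra.mapDomainAlgHom ℂ ℂ σ

lemma algExt_of {G : Type*} [Group G] (σ : G →* G) (g : G) :
    algExt σ (MonoidAlgebra.of ℂ G g) = MonoidAlgebra.single (σ g) 1 := by
  simp [algExt, MonoidAlgebra.of_apply, MonoidAlgebra.mapDomainAlgHom,
    MonoidAlgebra.mapDomain_single]

/-- if `G` is `(σ,τ)`-abelian (`σ(v)·u = u·τ(v)` for all `u, v`), then for
every `(σ,τ)`-derivation `D` of `ℂ[G]` and every `a ∈ G`, the coefficient map
`φ_a(g) = D(g)(σ(g)·a)` is a group homomorphism `G → (ℂ,+)`; i.e. `D` is a combination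
of `(σ,τ)`-central derivations. -/
theorem sigma_tau_abelian_derivations_are_central
    {G : Type*} [Group G] (σ τ : G →* G)
    (hab : ∀ u v : G, σ v * u = u * τ v)
    (D : MonoidAlgebra ℂ G →ₗ[ℂ] MonoidAlgebra ℂ G)
    (hD : ∀ a b : MonoidAlgebra ℂ G, D (a * b) = D a * algExt τ b + algExt σ a * D b) :
    ∀ a g₁ g₂ : G,
      (D (MonoidAlgebra.of ℂ G (g₁ * g₂))).coeff (σ (g₁ * g₂) * a)
        = (D (MonoidAlgebra.of ℂ G g₁)).coeff (σ g₁ * a)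
          + (D (MonoidAlgebra.of ℂ G g₂)).coeff (σ g₂ * a) := by
  intro a g₁ g₂
  have key : D (MonoidAlgebra.of ℂ G (g₁ * g₂))
      = D (MonoidAlgebra.of ℂ G g₁) * MonoidAlgebra.single (τ g₂) 1
        + MonoidAlgebra.single (σ g₁) 1 * D (MonoidAlgebra.of ℂ G g₂) := by
    rw [map_mul, hD, algExt_of, algExt_of]
  rw [key, MonoidAlgebra.coeff_add, Finsupp.add_apply, MonoidAlgebra.mul_single_apply, MonoidAlgebra.single_mul_apply,
    mul_one]
  have h1 : σ (g₁ * g₂) * a * (τ g₂)⁻¹ = σ g₁ * a := by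
    rw [map_mul, mul_assoc, mul_assoc, hab (a * (τ g₂)⁻¹) g₂]
    group
  have h2 : (σ g₁)⁻¹ * (σ (g₁ * g₂) * a) = σ g₂ * a := by
    rw [map_mul]; group
  rw [h1, h2, one_mul]
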